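/- In the cube complex 𝒞 of the Neretin group 𝒩_d, every vertex of height h has exactly h neighbours of higher height, and at most h! neighbours of lower height; in particular 𝒞 is locally finite. -/

import Mathlib

/-! Vertices of the rooted `d`-regular tree `𝒯_d` are finite words over `Fin d`; its boundary
`∂𝒯_d` is the set of infinite words `ℕ → Fin d`. -/

/-- Prepend the finite word `w` to the infinite word `x`. -/
def prepend (d : ℕ) (w : List (Fin d)) (x : ℕ → Fin d) : ℕ → Fin d :=
  fun n => if h : n < w.length then w.get ⟨n, h⟩ else x (n - w.length)

/-- The cylinder (ball of the boundary) determined by the vertex `w`. -/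
def Cyl (d : ℕ) (w : List (Fin d)) : Set (ℕ → Fin d) :=
  {x | ∃ y, x = prepend d w y}

/-- `L` is a complete antichain: every boundary point lies in exactly one cylinder `Cyl w`,
`w ∈ L`. (Complete antichains are exactly the leaf sets of admissible subtrees.) -/
def CompleteAntichain (d : ℕ) (L : Finset (List (Fin d))) : Prop :=
  ∀ x : ℕ → Fin d, ∃! w, w ∈ L ∧ x ∈ Cyl d w

/-- `g` is an almost automorphism of `𝒯_d`: a forest isomorphism
`𝒯_d ∖ S → 𝒯_d ∖ S'`, acting on the boundary by replacing the prefix `w ∈ L` (the leaves of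
`S`, a complete antichain) by `b w` (the leaves of `S'`). -/
def IsAA (d : ℕ) (g : (ℕ → Fin d) ≃ (ℕ → Fin d)) : Prop :=
  ∃ (L L' : Finset (List (Fin d))) (b : List (Fin d) → List (Fin d)),
    CompleteAntichain d L ∧ CompleteAntichain d L' ∧
    Set.BijOn b (↑L) (↑L') ∧
    ∀ w ∈ L, ∀ y, g (prepend d w y) = prepend d (b w) y

/-- The set of the `d` children of the vertex `w`. -/
def childrenF (d : ℕ) (w : List (Fin d)) : Finset (List (Fin d)) :=
  Finset.univ.image (fun i : Fin d => w ++ [i])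

/-- `T` is an admissible subtree of `𝒯_d`: a finite subtree containing the root, closed under
prefixes, in which every non-leaf vertex has all of its `d` children. -/
def Admissible (d : ℕ) (T : Finset (List (Fin d))) : Prop :=
  [] ∈ T ∧ (∀ w ∈ T, ∀ p : List (Fin d), p <+: w → p ∈ T) ∧
    ∀ w ∈ T, ∀ i : Fin d, w ++ [i] ∈ T ∨ ∀ j : Fin d, w ++ [j] ∉ T

/-- The leaves of the subtree `T`. -/
def leavesF (d : ℕ) (T : Finset (List (Fin d))) : Finset (List (Fin d)) :=
  T.filter (fun w => ∀ i : Fin d, w ++ [i] ∉ T)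

/-- A forest isomorphism `𝒯 ∖ S → 𝒯 ∖ R` (given on boundaries): a prefix replacement along a
bijection between the leaves of `S` and the leaves of `R`. -/
def FIso (d : ℕ) (g : (ℕ → Fin d) ≃ (ℕ → Fin d))
    (S R : Finset (List (Fin d))) : Prop :=
  ∃ b : List (Fin d) → List (Fin d),
    Set.BijOn b (↑(leavesF d S)) (↑(leavesF d R)) ∧
    ∀ w ∈ leavesF d S, ∀ y, g (prepend d w y) = prepend d (b w) y

/-- Pairs `(T, φ)` of a subtree and a boundary transformation. -/
abbrev VPair (d : ℕ) := Finset (List (Fin d)) × ((ℕ → Fin d) ≃ (ℕ → Fin d))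

/-- The defining relation of the vertex set of the Neretin cube complex `𝒞`:
`(R, μ) ∼ (S, ν)` iff both trees are admissible, both transformations are almost
automorphisms, and `μ⁻¹ ∘ ν` is a forest isomorphism `𝒯 ∖ S → 𝒯 ∖ R`. -/
def VRel (d : ℕ) (p q : VPair d) : Prop :=
  Admissible d p.1 ∧ Admissible d q.1 ∧ IsAA d p.2 ∧ IsAA d q.2 ∧
    FIso d (q.2.trans p.2.symm) q.1 p.1

/-- Vertices of the Neretin cube complex `𝒞`: classes `[T, φ]`. -/
def CVert (d : ℕ) := Quot (VRel d)

/-- The class `[T, φ]`. -/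
def mkV (d : ℕ) (p : VPair d) : CVert d := Quot.mk _ p

/-- The vertex `v` of `𝒞` has height `h`: it has a representative `[T, φ]` where the
admissible tree `T` has exactly `h` leaves. -/
def HeightIs (d : ℕ) (v : CVert d) (h : ℕ) : Prop :=
  ∃ (T : Finset (List (Fin d))) (φ : (ℕ → Fin d) ≃ (ℕ → Fin d)),
    Admissible d T ∧ IsAA d φ ∧ v = mkV d (T, φ) ∧ (leavesF d T).card = h

/-- Adjacency in `𝒞`: edges connect `[T, φ]` and `[T ∪ c(u), φ]` for `u` a leaf of `T`. -/
def AdjC (d : ℕ) (v w : CVert d) : Prop :=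
  ∃ (T : Finset (List (Fin d))) (φ : (ℕ → Fin d) ≃ (ℕ → Fin d)) (u : List (Fin d)),
    Admissible d T ∧ IsAA d φ ∧ u ∈ leavesF d T ∧
      ((v = mkV d (T, φ) ∧ w = mkV d (T ∪ childrenF d u, φ)) ∨
        (w = mkV d (T, φ) ∧ v = mkV d (T ∪ childrenF d u, φ)))

section NeretinAux

variable {d : ℕ}

/-- Prepend a single letter to an infinite word. -/
def consW {d : ℕ} (i : Fin d) (y : ℕ → Fin d) : ℕ → Fin d :=
  fun n => match n with
  | 0 => i
  | n + 1 => y n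

lemma consW_shift (z : ℕ → Fin d) : consW (z 0) (fun n => z (n + 1)) = z := by
  funext n; cases n <;> rfl

lemma prepend_append_single (w : List (Fin d)) (i : Fin d) (y : ℕ → Fin d) :
    prepend d (w ++ [i]) y = prepend d w (consW i y) := by
  funext n
  simp only [prepend, List.length_append, List.length_singleton, List.get_eq_getElem]
  rcases lt_trichotomy n w.length with hn | hn | hn
  · rw [dif_pos (by omega), dif_pos hn]
    exact List.getElem_append_left hn
  · subst hn
    rw [dif_pos (by omega), dif_neg (by omega)]
    simp [List.getElem_concat_length, consW]
  · rw [dif_neg (by omega), dif_neg (by omega)]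
    have h1 : n - w.length = (n - (w.length + 1)) + 1 := by omega
    rw [h1]
    rfl

lemma prepend_faithful_aux {u v : List (Fin d)} (hd : 2 ≤ d)
    (h : ∀ y, prepend d u y = prepend d v y) (hlt : u.length < v.length) : False := by
  have hcard : 1 < Fintype.card (Fin d) := by simpa using (show 1 < d by omega)
  obtain ⟨j, hj⟩ := Fintype.exists_ne_of_one_lt_card hcard (v.get ⟨u.length, hlt⟩)
  have := congrFun (h fun _ => j) u.length
  simp only [prepend, lt_irrefl, dif_neg (lt_irrefl u.length), dif_pos hlt,
    Nat.sub_self] at this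
  exact hj this

lemma prepend_faithful {w w' : List (Fin d)} (hd : 2 ≤ d)
    (h : ∀ y, prepend d w y = prepend d w' y) : w = w' := by
  have hlen : w.length = w'.length := by
    rcases lt_trichotomy w.length w'.length with hl | hl | hl
    · exact absurd (prepend_faithful_aux hd h hl) not_false
    · exact hl
    · exact absurd (prepend_faithful_aux hd (fun y => (h y).symm) hl) not_false
  have hz : (0 : ℕ) < d := by omega
  apply List.ext_getElem hlen
  intro n h1 h2
  have := congrFun (h fun _ => ⟨0, hz⟩) n
  simpa only [prepend, dif_pos h1, dif_pos h2, List.get_eq_getElem] using this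

end NeretinAux
section NeretinAux2

variable {d : ℕ}

lemma mem_leavesF {T : Finset (List (Fin d))} {x : List (Fin d)} :
    x ∈ leavesF d T ↔ x ∈ T ∧ ∀ i : Fin d, x ++ [i] ∉ T := by
  simp [leavesF]

lemma mem_childrenF {u x : List (Fin d)} :
    x ∈ childrenF d u ↔ ∃ i : Fin d, x = u ++ [i] := by
  simp [childrenF, eq_comm]

lemma append_single_injective (u : List (Fin d)) :
    Function.Injective (fun i : Fin d => u ++ [i]) := by
  intro i j hij
  simpa using hij

lemma card_childrenF (u : List (Fin d)) : (childrenF d u).card = d := by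
  rw [childrenF, Finset.card_image_of_injective _ (append_single_injective u)]
  simp

lemma child_not_mem_of_leaf {T : Finset (List (Fin d))} {u : List (Fin d)}
    (hu : u ∈ leavesF d T) (i : Fin d) : u ++ [i] ∉ T :=
  (mem_leavesF.1 hu).2 i

lemma leaf_prefix {T : Finset (List (Fin d))} (hT : Admissible d T)
    {a b : List (Fin d)} (ha : a ∈ leavesF d T) (hb : b ∈ T) (h : a <+: b) : b = a := by
  by_contra hne
  have hlt : a.length < b.length := by
    rcases lt_or_eq_of_le h.length_le with h' | h'
    · exact h'
    · exact absurd (List.IsPrefix.eq_of_length h h').symm hne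
  have htake : a = List.take a.length b := List.prefix_iff_eq_take.1 h
  have h2 : a ++ [b.get ⟨a.length, hlt⟩] <+: b := by
    rw [List.prefix_iff_eq_take]
    simp only [List.length_append, List.length_singleton]
    rw [List.take_succ, ← htake]
    simp [List.getElem?_eq_getElem hlt]
  exact (mem_leavesF.1 ha).2 _ (hT.2.1 _ hb _ h2)

lemma leavesF_nonempty {T : Finset (List (Fin d))} (hT : Admissible d T) :
    (leavesF d T).Nonempty := by
  obtain ⟨w, hw, hmax⟩ := Finset.exists_max_image T (fun l => l.length) ⟨[], hT.1⟩
  refine ⟨w, mem_leavesF.2 ⟨hw, fun i hi => ?_⟩⟩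
  have := hmax _ hi
  simp at this

lemma prefix_concat_cases {p u : List (Fin d)} {i : Fin d} (h : p <+: u ++ [i]) :
    p = u ++ [i] ∨ p <+: u := by
  obtain ⟨t, ht⟩ := h
  rcases List.eq_nil_or_concat t with rfl | ⟨t', x, rfl⟩
  · left; simpa using ht
  · right
    rw [List.concat_eq_append, ← List.append_assoc] at ht
    obtain ⟨h1, -⟩ := List.append_inj' ht rfl
    exact ⟨t', h1⟩

lemma admissible_union {T : Finset (List (Fin d))} {u : List (Fin d)}
    (hT : Admissible d T) (hu : u ∈ leavesF d T) :
    Admissible d (T ∪ childrenF d u) := by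
  obtain ⟨huT, huleaf⟩ := mem_leavesF.1 hu
  refine ⟨Finset.mem_union_left _ hT.1, ?_, ?_⟩
  · intro w hw p hp
    rcases Finset.mem_union.1 hw with hw | hw
    · exact Finset.mem_union_left _ (hT.2.1 w hw p hp)
    · obtain ⟨i, rfl⟩ := mem_childrenF.1 hw
      rcases prefix_concat_cases hp with rfl | hp'
      · exact Finset.mem_union_right _ (mem_childrenF.2 ⟨i, rfl⟩)
      · exact Finset.mem_union_left _ (hT.2.1 u huT p hp')
  · intro w hw i
    rcases Finset.mem_union.1 hw with hw | hw
    · rcases hT.2.2 w hw i with h | h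
      · exact Or.inl (Finset.mem_union_left _ h)
      · by_cases hwu : w = u
        · subst hwu
          exact Or.inl (Finset.mem_union_right _ (mem_childrenF.2 ⟨i, rfl⟩))
        · refine Or.inr fun j hj => ?_
          rcases Finset.mem_union.1 hj with hj | hj
          · exact h j hj
          · obtain ⟨k, hk⟩ := mem_childrenF.1 hj
            obtain ⟨h1, -⟩ := List.append_inj' hk rfl
            exact hwu h1
    · obtain ⟨k, rfl⟩ := mem_childrenF.1 hw
      refine Or.inr fun j hj => ?_
      rcases Finset.mem_union.1 hj with hj | hj
      · exact huleaf k (hT.2.1 _ hj _ ⟨[j], by simp⟩)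
      · obtain ⟨m, hm⟩ := mem_childrenF.1 hj
        have := congrArg List.length hm
        simp at this

lemma leavesF_union (h0 : 0 < d) {T : Finset (List (Fin d))} {u : List (Fin d)}
    (hT : Admissible d T) (hu : u ∈ leavesF d T) :
    leavesF d (T ∪ childrenF d u) = (leavesF d T).erase u ∪ childrenF d u := by
  obtain ⟨huT, huleaf⟩ := mem_leavesF.1 hu
  ext w
  simp only [mem_leavesF, Finset.mem_union, Finset.mem_erase]
  constructor
  · rintro ⟨hw, hleaf⟩
    rcases hw with hw | hw
    · refine Or.inl ⟨?_, hw, fun i hi => hleaf i (Or.inl hi)⟩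
      rintro rfl
      exact hleaf ⟨0, h0⟩ (Or.inr (mem_childrenF.2 ⟨⟨0, h0⟩, rfl⟩))
    · exact Or.inr hw
  · rintro (⟨hwu, hw⟩ | hw)
    · obtain ⟨hwT, hwleaf⟩ := hw
      refine ⟨Or.inl hwT, fun i hi => ?_⟩
      rcases hi with hi | hi
      · exact hwleaf i hi
      · obtain ⟨k, hk⟩ := mem_childrenF.1 hi
        obtain ⟨h1, -⟩ := List.append_inj' hk rfl
        exact hwu h1
    · obtain ⟨k, rfl⟩ := mem_childrenF.1 hw
      refine ⟨Or.inr (mem_childrenF.2 ⟨k, rfl⟩), fun i hi => ?_⟩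
      rcases hi with hi | hi
      · exact huleaf k (hT.2.1 _ hi _ ⟨[i], by simp⟩)
      · obtain ⟨m, hm⟩ := mem_childrenF.1 hi
        have := congrArg List.length hm
        simp at this

lemma childrenF_disjoint_leaves {T : Finset (List (Fin d))} {u : List (Fin d)}
    (hu : u ∈ leavesF d T) :
    Disjoint ((leavesF d T).erase u) (childrenF d u) := by
  rw [Finset.disjoint_right]
  intro x hx hx'
  obtain ⟨k, rfl⟩ := mem_childrenF.1 hx
  exact (mem_leavesF.1 hu).2 k (mem_leavesF.1 (Finset.mem_of_mem_erase hx')).1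

lemma card_leavesF_union (h0 : 0 < d) {T : Finset (List (Fin d))} {u : List (Fin d)}
    (hT : Admissible d T) (hu : u ∈ leavesF d T) :
    (leavesF d (T ∪ childrenF d u)).card = (leavesF d T).card - 1 + d := by
  rw [leavesF_union h0 hT hu, Finset.card_union_of_disjoint (childrenF_disjoint_leaves hu),
    Finset.card_erase_of_mem hu, card_childrenF]

end NeretinAux2
section NeretinAux3

variable {d : ℕ}

lemma vrel_refl {T : Finset (List (Fin d))} {φ : (ℕ → Fin d) ≃ (ℕ → Fin d)}
    (hT : Admissible d T) (hφ : IsAA d φ) : VRel d (T, φ) (T, φ) :=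
  ⟨hT, hT, hφ, hφ, id, Set.bijOn_id _, fun w _ y => by simp⟩

lemma vrel_symm {p q : VPair d} (h : VRel d p q) : VRel d q p := by
  obtain ⟨h1, h2, h3, h4, b, hb, hrep⟩ := h
  refine ⟨h2, h1, h4, h3, Function.invFunOn b (↑(leavesF d q.1)), ?_, ?_⟩
  · exact Set.BijOn.symm hb.invOn_invFunOn.symm hb
  · intro w hw y
    have hsym := Set.BijOn.symm hb.invOn_invFunOn.symm hb
    have ha : Function.invFunOn b (↑(leavesF d q.1)) w ∈ leavesF d q.1 :=
      hsym.mapsTo (Finset.mem_coe.2 hw)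
    have hba : b (Function.invFunOn b (↑(leavesF d q.1)) w) = w :=
      hb.invOn_invFunOn.2 (Finset.mem_coe.2 hw)
    have := hrep _ ha y
    rw [hba] at this
    simp only [Equiv.trans_apply] at this ⊢
    rw [← this]
    simp

lemma vrel_trans {p q r : VPair d} (h1 : VRel d p q) (h2 : VRel d q r) : VRel d p r := by
  obtain ⟨hA1, hA2, hI1, hI2, b1, hb1, hr1⟩ := h1
  obtain ⟨-, hA3, -, hI3, b2, hb2, hr2⟩ := h2
  refine ⟨hA1, hA3, hI1, hI3, b1 ∘ b2, Set.BijOn.comp hb1 hb2, ?_⟩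
  intro w hw y
  have e2 := hr2 w hw y
  have e1 := hr1 (b2 w) (hb2.mapsTo hw) y
  simp only [Equiv.trans_apply, Function.comp_apply] at e1 e2 ⊢
  have : r.2 (prepend d w y) = q.2 (prepend d (b2 w) y) := by
    rw [← e2]; simp
  rw [this, e1]

lemma vrel_of_mk_eq {p q : VPair d} (h : mkV d p = mkV d q) : p = q ∨ VRel d p q := by
  have h' : Relation.EqvGen (VRel d) p q := Quot.eq.1 h
  clear h
  induction h' with
  | rel a b hab => exact Or.inr hab
  | refl a => exact Or.inl rfl
  | symm a b _ ih =>
    rcases ih with rfl | hr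
    · exact Or.inl rfl
    · exact Or.inr (vrel_symm hr)
  | trans a b c _ _ ih1 ih2 =>
    rcases ih1 with rfl | hr1
    · exact ih2
    · rcases ih2 with rfl | hr2
      · exact Or.inr hr1
      · exact Or.inr (vrel_trans hr1 hr2)

lemma vrel_card {p q : VPair d} (h : VRel d p q) :
    (leavesF d p.1).card = (leavesF d q.1).card := by
  obtain ⟨-, -, -, -, b, hb, -⟩ := h
  have h1 : (↑(leavesF d p.1) : Set (List (Fin d))).ncard
      = (↑(leavesF d q.1) : Set (List (Fin d))).ncard := by
    rw [← hb.image_eq, Set.ncard_image_of_injOn hb.injOn]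
  simpa [Set.ncard_coe_finset] using h1

/-- Height as a well-defined function on vertices. -/
def htV (d : ℕ) : CVert d → ℕ :=
  Quot.lift (fun p => (leavesF d p.1).card) fun _ _ hpq => vrel_card hpq

lemma htV_mk (p : VPair d) : htV d (mkV d p) = (leavesF d p.1).card := rfl

lemma heightIs_htV {v : CVert d} {h : ℕ} (hv : HeightIs d v h) : htV d v = h := by
  obtain ⟨T, φ, -, -, rfl, hc⟩ := hv
  exact hc

end NeretinAux3
section NeretinAux4

variable {d : ℕ}

lemma vrel_extend (hd : 2 ≤ d) {T T' : Finset (List (Fin d))}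
    {φ φ' : (ℕ → Fin d) ≃ (ℕ → Fin d)}
    (h : VRel d (T, φ) (T', φ')) {u' : List (Fin d)} (hu' : u' ∈ leavesF d T') :
    ∃ u ∈ leavesF d T,
      VRel d (T ∪ childrenF d u, φ) (T' ∪ childrenF d u', φ') := by
  have h0 : 0 < d := by omega
  obtain ⟨hT, hT', hφ, hφ', b, hb, hr⟩ := h
  have hu : b u' ∈ leavesF d T := hb.mapsTo (Finset.mem_coe.2 hu')
  refine ⟨b u', hu, admissible_union hT hu, admissible_union hT' hu', hφ, hφ', ?_⟩
  set b' : List (Fin d) → List (Fin d) :=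
    fun w => if u'.length < w.length ∧ u' <+: w then b u' ++ w.drop u'.length else b w
    with hb'def
  have hbe : ∀ a ∈ (leavesF d T').erase u', b' a = b a := by
    intro a ha
    obtain ⟨hne, haL⟩ := Finset.mem_erase.1 ha
    rw [hb'def]
    simp only
    rw [if_neg]
    rintro ⟨hlen, hpre⟩
    have := leaf_prefix hT' hu' (mem_leavesF.1 haL).1 hpre
    simp [this] at hlen
  have hbc : ∀ i : Fin d, b' (u' ++ [i]) = b u' ++ [i] := by
    intro i
    rw [hb'def]
    simp only
    rw [if_pos ⟨by simp, ⟨[i], rfl⟩⟩, List.drop_left]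
  have hLD : leavesF d (T' ∪ childrenF d u')
      = (leavesF d T').erase u' ∪ childrenF d u' := leavesF_union h0 hT' hu'
  have hLC : leavesF d (T ∪ childrenF d (b u'))
      = (leavesF d T).erase (b u') ∪ childrenF d (b u') := leavesF_union h0 hT hu
  refine ⟨b', ?_, ?_⟩
  · rw [hLD, hLC]
    constructor
    · -- MapsTo
      intro w hw
      simp only [Finset.coe_union, Set.mem_union, Finset.mem_coe] at hw ⊢
      rcases hw with hw | hw
      · left
        rw [hbe w hw]
        obtain ⟨hne, hwL⟩ := Finset.mem_erase.1 hw
        refine Finset.mem_erase.2 ⟨fun hEq => hne ?_, hb.mapsTo (Finset.mem_coe.2 hwL)⟩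
        exact hb.injOn (Finset.mem_coe.2 hwL) (Finset.mem_coe.2 hu') hEq
      · right
        obtain ⟨i, rfl⟩ := mem_childrenF.1 hw
        rw [hbc i]
        exact mem_childrenF.2 ⟨i, rfl⟩
    constructor
    · -- InjOn
      intro w1 h1 w2 h2 heq
      simp only [Finset.coe_union, Set.mem_union, Finset.mem_coe] at h1 h2
      rcases h1 with h1 | h1 <;> rcases h2 with h2 | h2
      · rw [hbe w1 h1, hbe w2 h2] at heq
        exact hb.injOn (Finset.mem_coe.2 (Finset.mem_of_mem_erase h1))
          (Finset.mem_coe.2 (Finset.mem_of_mem_erase h2)) heq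
      · obtain ⟨i, rfl⟩ := mem_childrenF.1 h2
        rw [hbe w1 h1, hbc i] at heq
        have hmem : b u' ++ [i] ∈ leavesF d T := by
          rw [← heq]
          exact hb.mapsTo (Finset.mem_coe.2 (Finset.mem_of_mem_erase h1))
        exact absurd (mem_leavesF.1 hmem).1 (child_not_mem_of_leaf hu i)
      · obtain ⟨i, rfl⟩ := mem_childrenF.1 h1
        rw [hbe w2 h2, hbc i] at heq
        have hmem : b u' ++ [i] ∈ leavesF d T := by
          rw [heq]
          exact hb.mapsTo (Finset.mem_coe.2 (Finset.mem_of_mem_erase h2))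
        exact absurd (mem_leavesF.1 hmem).1 (child_not_mem_of_leaf hu i)
      · obtain ⟨i, rfl⟩ := mem_childrenF.1 h1
        obtain ⟨j, rfl⟩ := mem_childrenF.1 h2
        rw [hbc i, hbc j] at heq
        have := List.append_cancel_left heq
        simp at this
        rw [this]
    · -- SurjOn
      intro t ht
      simp only [Finset.coe_union, Set.mem_union, Finset.mem_coe] at ht
      rcases ht with ht | ht
      · obtain ⟨htne, htL⟩ := Finset.mem_erase.1 ht
        obtain ⟨a, haL, hba⟩ := hb.surjOn (Finset.mem_coe.2 htL)
        have hane : a ≠ u' := by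
          rintro rfl
          exact htne hba.symm
        refine ⟨a, ?_, ?_⟩
        · simp only [Finset.coe_union, Set.mem_union, Finset.mem_coe]
          exact Or.inl (Finset.mem_erase.2 ⟨hane, Finset.mem_coe.1 haL⟩)
        · rw [hbe a (Finset.mem_erase.2 ⟨hane, Finset.mem_coe.1 haL⟩)]
          exact hba
      · obtain ⟨i, rfl⟩ := mem_childrenF.1 ht
        refine ⟨u' ++ [i], ?_, hbc i⟩
        simp only [Finset.coe_union, Set.mem_union, Finset.mem_coe]
        exact Or.inr (mem_childrenF.2 ⟨i, rfl⟩)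
  · -- replacement rule
    intro w hw y
    rw [hLD] at hw
    rcases Finset.mem_union.1 hw with hw | hw
    · rw [hbe w hw]
      exact hr w (Finset.mem_of_mem_erase hw) y
    · obtain ⟨i, rfl⟩ := mem_childrenF.1 hw
      rw [hbc i, prepend_append_single, prepend_append_single]
      exact hr u' hu' (consW i y)

end NeretinAux4
section NeretinAux5

variable {d : ℕ}

lemma up_inj (hd : 2 ≤ d) {T : Finset (List (Fin d))} {φ : (ℕ → Fin d) ≃ (ℕ → Fin d)}
    (hT : Admissible d T) {u u' : List (Fin d)}
    (hu : u ∈ leavesF d T) (hu' : u' ∈ leavesF d T)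
    (h : mkV d (T ∪ childrenF d u, φ) = mkV d (T ∪ childrenF d u', φ)) : u = u' := by
  have h0 : 0 < d := by omega
  have hleq : leavesF d (T ∪ childrenF d u) = leavesF d (T ∪ childrenF d u') := by
    rcases vrel_of_mk_eq h with heq | hrel
    · have := congrArg Prod.fst heq
      simp only at this
      rw [this]
    · obtain ⟨-, -, -, -, b, hb, hrep⟩ := hrel
      have hb_id : ∀ w ∈ leavesF d (T ∪ childrenF d u'), b w = w := by
        intro w hw
        refine (prepend_faithful hd fun y => ?_).symm
        have := hrep w hw y
        simp only [Equiv.trans_apply, Equiv.symm_apply_apply] at this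
        exact this
      have himg :
          (↑(leavesF d (T ∪ childrenF d u')) : Set (List (Fin d)))
            = ↑(leavesF d (T ∪ childrenF d u)) := by
        rw [← hb.image_eq]
        rw [Set.image_congr fun x hx => hb_id x (Finset.mem_coe.1 hx)]
        simp
      exact (Finset.coe_inj.1 himg).symm
  have hmem : u ++ [⟨0, h0⟩] ∈ leavesF d (T ∪ childrenF d u') := by
    rw [← hleq, leavesF_union h0 hT hu]
    exact Finset.mem_union_right _ (mem_childrenF.2 ⟨⟨0, h0⟩, rfl⟩)
  rw [leavesF_union h0 hT hu'] at hmem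
  rcases Finset.mem_union.1 hmem with h1 | h1
  · have hmemT := (mem_leavesF.1 (Finset.mem_of_mem_erase h1)).1
    exact absurd hmemT (child_not_mem_of_leaf hu _)
  · obtain ⟨j, hj⟩ := mem_childrenF.1 h1
    exact (List.append_inj' hj rfl).1

end NeretinAux5
section NeretinAux6

variable {d : ℕ}

lemma down_eq (h0 : 0 < d) {φ : (ℕ → Fin d) ≃ (ℕ → Fin d)} {L : Finset (List (Fin d))}
    {T1 T2 : Finset (List (Fin d))} {φ1 φ2 : (ℕ → Fin d) ≃ (ℕ → Fin d)}
    {u1 u2 : List (Fin d)} {b1 b2 : List (Fin d) → List (Fin d)}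
    (hA1 : Admissible d T1) (hA2 : Admissible d T2)
    (hI1 : IsAA d φ1) (hI2 : IsAA d φ2)
    (hu1 : u1 ∈ leavesF d T1) (hu2 : u2 ∈ leavesF d T2)
    (hb1 : Set.BijOn b1 (↑(leavesF d (T1 ∪ childrenF d u1))) (↑L))
    (hb2 : Set.BijOn b2 (↑(leavesF d (T2 ∪ childrenF d u2))) (↑L))
    (hr1 : ∀ w ∈ leavesF d (T1 ∪ childrenF d u1), ∀ y,
      (φ1.trans φ.symm) (prepend d w y) = prepend d (b1 w) y)
    (hr2 : ∀ w ∈ leavesF d (T2 ∪ childrenF d u2), ∀ y,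
      (φ2.trans φ.symm) (prepend d w y) = prepend d (b2 w) y)
    (htuple : ∀ i : Fin d, b1 (u1 ++ [i]) = b2 (u2 ++ [i])) :
    mkV d (T1, φ1) = mkV d (T2, φ2) := by
  have hL1 : leavesF d (T1 ∪ childrenF d u1)
      = (leavesF d T1).erase u1 ∪ childrenF d u1 := leavesF_union h0 hA1 hu1
  have hL2 : leavesF d (T2 ∪ childrenF d u2)
      = (leavesF d T2).erase u2 ∪ childrenF d u2 := leavesF_union h0 hA2 hu2
  have hmem1 : ∀ i : Fin d, u1 ++ [i] ∈ leavesF d (T1 ∪ childrenF d u1) := by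
    intro i; rw [hL1]; exact Finset.mem_union_right _ (mem_childrenF.2 ⟨i, rfl⟩)
  have hmem2 : ∀ i : Fin d, u2 ++ [i] ∈ leavesF d (T2 ∪ childrenF d u2) := by
    intro i; rw [hL2]; exact Finset.mem_union_right _ (mem_childrenF.2 ⟨i, rfl⟩)
  have hmem1' : ∀ a ∈ (leavesF d T1).erase u1, a ∈ leavesF d (T1 ∪ childrenF d u1) := by
    intro a ha; rw [hL1]; exact Finset.mem_union_left _ ha
  have hmem2' : ∀ a ∈ (leavesF d T2).erase u2, a ∈ leavesF d (T2 ∪ childrenF d u2) := by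
    intro a ha; rw [hL2]; exact Finset.mem_union_left _ ha
  set inv1 := Function.invFunOn b1 (↑(leavesF d (T1 ∪ childrenF d u1))) with hinv1def
  have hinv : Set.InvOn inv1 b1 (↑(leavesF d (T1 ∪ childrenF d u1))) (↑L) :=
    hb1.invOn_invFunOn
  have hsym1 : Set.BijOn inv1 (↑L) (↑(leavesF d (T1 ∪ childrenF d u1))) :=
    Set.BijOn.symm hb1.invOn_invFunOn.symm hb1
  -- the value of β on the non-merged leaves
  have hval : ∀ a ∈ (leavesF d T2).erase u2,
      inv1 (b2 a) ∈ (leavesF d T1).erase u1 ∧ b1 (inv1 (b2 a)) = b2 a := by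
    intro a ha
    have haD : a ∈ leavesF d (T2 ∪ childrenF d u2) := hmem2' a ha
    have hbL : b2 a ∈ (↑L : Set (List (Fin d))) := hb2.mapsTo (Finset.mem_coe.2 haD)
    have htD : inv1 (b2 a) ∈ leavesF d (T1 ∪ childrenF d u1) :=
      Finset.mem_coe.1 (hsym1.mapsTo hbL)
    have hbt : b1 (inv1 (b2 a)) = b2 a := hinv.2 hbL
    refine ⟨?_, hbt⟩
    rw [hL1] at htD
    rcases Finset.mem_union.1 htD with htD' | htD'
    · exact htD'
    · exfalso
      obtain ⟨i, hi⟩ := mem_childrenF.1 htD'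
      have : b2 a = b2 (u2 ++ [i]) := by
        rw [← hbt, hi, htuple i]
      have haeq : a = u2 ++ [i] :=
        hb2.injOn (Finset.mem_coe.2 haD) (Finset.mem_coe.2 (hmem2 i)) this
      have haT2 : a ∈ T2 := (mem_leavesF.1 (Finset.mem_of_mem_erase ha)).1
      rw [haeq] at haT2
      exact child_not_mem_of_leaf hu2 i haT2
  set β : List (Fin d) → List (Fin d) :=
    fun a => if a = u2 then u1 else inv1 (b2 a) with hβdef
  have hβu2 : β u2 = u1 := by rw [hβdef]; simp
  have hβe : ∀ a ∈ (leavesF d T2).erase u2, β a = inv1 (b2 a) := by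
    intro a ha
    rw [hβdef]
    simp only
    rw [if_neg (Finset.mem_erase.1 ha).1]
  apply Quot.sound
  refine ⟨hA1, hA2, hI1, hI2, β, ⟨?_, ?_, ?_⟩, ?_⟩
  · -- MapsTo
    intro a ha
    rw [Finset.mem_coe] at ha
    by_cases hau : a = u2
    · subst hau; rw [hβu2]; exact Finset.mem_coe.2 hu1
    · have ha' : a ∈ (leavesF d T2).erase u2 := Finset.mem_erase.2 ⟨hau, ha⟩
      rw [hβe a ha']
      exact Finset.mem_coe.2 (Finset.mem_of_mem_erase (hval a ha').1)
  · -- InjOn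
    intro a ha a' ha' heq
    rw [Finset.mem_coe] at ha ha'
    by_cases hau : a = u2 <;> by_cases hau' : a' = u2
    · rw [hau, hau']
    · exfalso
      have h1 : a' ∈ (leavesF d T2).erase u2 := Finset.mem_erase.2 ⟨hau', ha'⟩
      rw [hau, hβu2, hβe a' h1] at heq
      exact (Finset.mem_erase.1 (hval a' h1).1).1 heq.symm
    · exfalso
      have h1 : a ∈ (leavesF d T2).erase u2 := Finset.mem_erase.2 ⟨hau, ha⟩
      rw [hau', hβu2, hβe a h1] at heq
      exact (Finset.mem_erase.1 (hval a h1).1).1 heq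
    · have h1 : a ∈ (leavesF d T2).erase u2 := Finset.mem_erase.2 ⟨hau, ha⟩
      have h2 : a' ∈ (leavesF d T2).erase u2 := Finset.mem_erase.2 ⟨hau', ha'⟩
      rw [hβe a h1, hβe a' h2] at heq
      have : b2 a = b2 a' := by
        rw [← (hval a h1).2, ← (hval a' h2).2, heq]
      exact hb2.injOn (Finset.mem_coe.2 (hmem2' a h1)) (Finset.mem_coe.2 (hmem2' a' h2)) this
  · -- SurjOn
    intro t ht
    rw [Finset.mem_coe] at ht
    by_cases htu : t = u1
    · exact ⟨u2, Finset.mem_coe.2 hu2, by rw [hβu2, htu]⟩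
    · have htD : t ∈ leavesF d (T1 ∪ childrenF d u1) :=
        hmem1' t (Finset.mem_erase.2 ⟨htu, ht⟩)
      have hbtL : b1 t ∈ (↑L : Set (List (Fin d))) := hb1.mapsTo (Finset.mem_coe.2 htD)
      obtain ⟨a, haD, hba⟩ := hb2.surjOn hbtL
      rw [Finset.mem_coe, hL2] at haD
      rcases Finset.mem_union.1 haD with haD' | haD'
      · refine ⟨a, Finset.mem_coe.2 (Finset.mem_of_mem_erase haD'), ?_⟩
        rw [hβe a haD', hba, hinv.1 (Finset.mem_coe.2 htD)]
      · exfalso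
        obtain ⟨i, rfl⟩ := mem_childrenF.1 haD'
        have : b1 (u1 ++ [i]) = b1 t := by rw [htuple i, hba]
        have heq2 : u1 ++ [i] = t :=
          hb1.injOn (Finset.mem_coe.2 (hmem1 i)) (Finset.mem_coe.2 htD) this
        have htT1 : t ∈ T1 := (mem_leavesF.1 ht).1
        rw [← heq2] at htT1
        exact child_not_mem_of_leaf hu1 i htT1
  · -- replacement rule
    intro a ha y
    by_cases hau : a = u2
    · rw [hau, hβu2]
      have hy : prepend d u2 y = prepend d (u2 ++ [y 0]) (fun n => y (n + 1)) := by
        rw [prepend_append_single, consW_shift]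
      have hy1 : prepend d u1 y = prepend d (u1 ++ [y 0]) (fun n => y (n + 1)) := by
        rw [prepend_append_single, consW_shift]
      have e2 := hr2 (u2 ++ [y 0]) (hmem2 (y 0)) (fun n => y (n + 1))
      have e1 := hr1 (u1 ++ [y 0]) (hmem1 (y 0)) (fun n => y (n + 1))
      simp only [Equiv.trans_apply] at e1 e2 ⊢
      rw [hy, hy1]
      rw [Equiv.symm_apply_eq]
      rw [Equiv.symm_apply_eq] at e1 e2
      rw [e2, ← htuple (y 0), ← e1]
    · have ha' : a ∈ (leavesF d T2).erase u2 :=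
        Finset.mem_erase.2 ⟨hau, ha⟩
      obtain ⟨htmem, hbt⟩ := hval a ha'
      rw [hβe a ha']
      have e2 := hr2 a (hmem2' a ha') y
      have e1 := hr1 (inv1 (b2 a)) (hmem1' _ htmem) y
      simp only [Equiv.trans_apply] at e1 e2 ⊢
      rw [Equiv.symm_apply_eq]
      rw [Equiv.symm_apply_eq] at e1 e2
      rw [hbt] at e1
      rw [e2, ← e1]

end NeretinAux6
lemma htV_mk' {d : ℕ} (T : Finset (List (Fin d))) (φ : (ℕ → Fin d) ≃ (ℕ → Fin d)) :
    htV d (mkV d (T, φ)) = (leavesF d T).card := rfl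

/-- In the cube complex `𝒞` of the Neretin group `𝒩_d`, every vertex of height
`h` has exactly `h` neighbours of higher height and at most `h!` neighbours of lower height;
in particular `𝒞` is locally finite. -/
theorem neretin_complex_locally_finite (d : ℕ) (hd : 2 ≤ d)
    (v : CVert d) (h : ℕ) (hv : HeightIs d v h) :
    {w : CVert d | AdjC d v w ∧ ∃ h' : ℕ, HeightIs d w h' ∧ h < h'}.ncard = h ∧
      {w : CVert d | AdjC d v w ∧ ∃ h' : ℕ, HeightIs d w h' ∧ h' < h}.ncard ≤
        Nat.factorial h ∧
      {w : CVert d | AdjC d v w}.Finite := by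
  obtain ⟨T, φ, hT, hφ, rfl, hcard⟩ := hv
  have h0 : 0 < d := by omega
  have hh1 : 1 ≤ h := by
    rw [← hcard]
    exact Finset.card_pos.2 (leavesF_nonempty hT)
  -- ### the set of neighbours of higher height
  have hUPeq : {w : CVert d | AdjC d (mkV d (T, φ)) w ∧ ∃ h' : ℕ, HeightIs d w h' ∧ h < h'}
      = (fun u => mkV d (T ∪ childrenF d u, φ)) '' ↑(leavesF d T) := by
    ext w
    simp only [Set.mem_setOf_eq, Set.mem_image, Finset.mem_coe]
    constructor
    · rintro ⟨⟨T', φ', u', hA', hI', hu', hcase⟩, h', hwh', hlt⟩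
      rcases hcase with ⟨hv1, hw1⟩ | ⟨hw1, hv1⟩
      · have hrel : VRel d (T, φ) (T', φ') := by
          rcases vrel_of_mk_eq hv1 with heq | hrel
          · rw [← heq]; exact vrel_refl hT hφ
          · exact hrel
        obtain ⟨u, hu, hrel2⟩ := vrel_extend hd hrel hu'
        exact ⟨u, hu, by rw [hw1]; exact Quot.sound hrel2⟩
      · exfalso
        have e1 : (leavesF d T).card = (leavesF d (T' ∪ childrenF d u')).card := by
          have := congrArg (htV d) hv1
          rw [htV_mk', htV_mk'] at this
          exact this
        have e2 : (leavesF d T').card = h' := by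
          have h2 := heightIs_htV hwh'
          rw [hw1, htV_mk'] at h2
          exact h2
        have e3 := card_leavesF_union h0 hA' hu'
        have e4 : 1 ≤ (leavesF d T').card := Finset.card_pos.2 (leavesF_nonempty hA')
        omega
    · rintro ⟨u, hu, rfl⟩
      refine ⟨⟨T, φ, u, hT, hφ, hu, Or.inl ⟨rfl, rfl⟩⟩, (leavesF d T).card - 1 + d,
        ⟨T ∪ childrenF d u, φ, admissible_union hT hu, hφ, rfl,
          card_leavesF_union h0 hT hu⟩, by omega⟩
  have hUPcard : {w : CVert d | AdjC d (mkV d (T, φ)) w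
      ∧ ∃ h' : ℕ, HeightIs d w h' ∧ h < h'}.ncard = h := by
    have hinj : Set.InjOn (fun u => mkV d (T ∪ childrenF d u, φ)) ↑(leavesF d T) :=
      fun u huS u' huS' hE =>
        up_inj hd hT (Finset.mem_coe.1 huS) (Finset.mem_coe.1 huS') hE
    rw [hUPeq, Set.ncard_image_of_injOn hinj, Set.ncard_coe_finset, hcard]
  have hUPfin : {w : CVert d | AdjC d (mkV d (T, φ)) w
      ∧ ∃ h' : ℕ, HeightIs d w h' ∧ h < h'}.Finite := by
    rw [hUPeq]
    exact (leavesF d T).finite_toSet.image _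
  -- ### the set of neighbours of lower height
  have hex : ∀ w : CVert d,
      (AdjC d (mkV d (T, φ)) w ∧ ∃ h' : ℕ, HeightIs d w h' ∧ h' < h) →
      ∃ c : Fin d ↪ {x // x ∈ leavesF d T},
        ∃ (T1 : Finset (List (Fin d))) (φ1 : (ℕ → Fin d) ≃ (ℕ → Fin d))
          (u1 : List (Fin d)) (b1 : List (Fin d) → List (Fin d)),
          Admissible d T1 ∧ IsAA d φ1 ∧ u1 ∈ leavesF d T1 ∧
          Set.BijOn b1 (↑(leavesF d (T1 ∪ childrenF d u1))) (↑(leavesF d T)) ∧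
          (∀ w' ∈ leavesF d (T1 ∪ childrenF d u1), ∀ y,
            (φ1.trans φ.symm) (prepend d w' y) = prepend d (b1 w') y) ∧
          w = mkV d (T1, φ1) ∧ ∀ i : Fin d, b1 (u1 ++ [i]) = (c i : List (Fin d)) := by
    rintro w ⟨⟨T', φ', u', hA', hI', hu', hcase⟩, h', hwh', hlt⟩
    rcases hcase with ⟨hv1, hw1⟩ | ⟨hw1, hv1⟩
    · exfalso
      have e1 : (leavesF d T).card = (leavesF d T').card := by
        have := congrArg (htV d) hv1
        rw [htV_mk', htV_mk'] at this
        exact this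
      have e2 : (leavesF d (T' ∪ childrenF d u')).card = h' := by
        have h2 := heightIs_htV hwh'
        rw [hw1, htV_mk'] at h2
        exact h2
      have e3 := card_leavesF_union h0 hA' hu'
      have e4 : 1 ≤ (leavesF d T').card := Finset.card_pos.2 (leavesF_nonempty hA')
      omega
    · have hrel : VRel d (T, φ) (T' ∪ childrenF d u', φ') := by
        rcases vrel_of_mk_eq hv1 with heq | hrel
        · rw [← heq]; exact vrel_refl hT hφ
        · exact hrel
      obtain ⟨-, -, -, -, b, hb, hrep⟩ := hrel
      have hmemc : ∀ i : Fin d, u' ++ [i] ∈ leavesF d (T' ∪ childrenF d u') := by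
        intro i
        rw [leavesF_union h0 hA' hu']
        exact Finset.mem_union_right _ (mem_childrenF.2 ⟨i, rfl⟩)
      have hcin : ∀ i : Fin d, b (u' ++ [i]) ∈ leavesF d T :=
        fun i => Finset.mem_coe.1 (hb.mapsTo (Finset.mem_coe.2 (hmemc i)))
      refine ⟨⟨fun i => ⟨b (u' ++ [i]), hcin i⟩, ?_⟩,
        T', φ', u', b, hA', hI', hu', hb, hrep, hw1, fun i => rfl⟩
      intro i j hij
      have h2 : b (u' ++ [i]) = b (u' ++ [j]) := congrArg Subtype.val hij
      have h3 := hb.injOn (Finset.mem_coe.2 (hmemc i)) (Finset.mem_coe.2 (hmemc j)) h2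
      simpa using h3
  have hex' : ∀ w : {w : CVert d // AdjC d (mkV d (T, φ)) w
      ∧ ∃ h' : ℕ, HeightIs d w h' ∧ h' < h},
      ∃ c : Fin d ↪ {x // x ∈ leavesF d T},
        ∃ (T1 : Finset (List (Fin d))) (φ1 : (ℕ → Fin d) ≃ (ℕ → Fin d))
          (u1 : List (Fin d)) (b1 : List (Fin d) → List (Fin d)),
          Admissible d T1 ∧ IsAA d φ1 ∧ u1 ∈ leavesF d T1 ∧
          Set.BijOn b1 (↑(leavesF d (T1 ∪ childrenF d u1))) (↑(leavesF d T)) ∧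
          (∀ w' ∈ leavesF d (T1 ∪ childrenF d u1), ∀ y,
            (φ1.trans φ.symm) (prepend d w' y) = prepend d (b1 w') y) ∧
          (w : CVert d) = mkV d (T1, φ1) ∧ ∀ i : Fin d, b1 (u1 ++ [i]) = (c i : List (Fin d)) :=
    fun w => hex w w.2
  choose f hf using hex'
  have hfinj : Function.Injective f := by
    intro w1 w2 hE
    obtain ⟨T1, φ1, u1, b1, hA1, hI1, hu1, hb1, hr1, hw1, ht1⟩ := hf w1
    obtain ⟨T2, φ2, u2, b2, hA2, hI2, hu2, hb2, hr2, hw2, ht2⟩ := hf w2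
    have htuple : ∀ i : Fin d, b1 (u1 ++ [i]) = b2 (u2 ++ [i]) := by
      intro i
      rw [ht1 i, ht2 i, hE]
    have := down_eq h0 hA1 hA2 hI1 hI2 hu1 hu2 hb1 hb2 hr1 hr2 htuple
    apply Subtype.ext
    rw [hw1, hw2, this]
  have hDfin0 : Finite {w : CVert d // AdjC d (mkV d (T, φ)) w
      ∧ ∃ h' : ℕ, HeightIs d w h' ∧ h' < h} := Finite.of_injective f hfinj
  have hDOWNfin : {w : CVert d | AdjC d (mkV d (T, φ)) w
      ∧ ∃ h' : ℕ, HeightIs d w h' ∧ h' < h}.Finite := Set.finite_coe_iff.1 hDfin0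
  have hDOWNcard : {w : CVert d | AdjC d (mkV d (T, φ)) w
      ∧ ∃ h' : ℕ, HeightIs d w h' ∧ h' < h}.ncard ≤ Nat.factorial h := by
    have h1 : Nat.card ↑{w : CVert d | AdjC d (mkV d (T, φ)) w
        ∧ ∃ h' : ℕ, HeightIs d w h' ∧ h' < h}
        ≤ Nat.card (Fin d ↪ {x // x ∈ leavesF d T}) :=
      Nat.card_le_card_of_injective f hfinj
    have h2 : Nat.card (Fin d ↪ {x // x ∈ leavesF d T}) = Nat.descFactorial h d := by
      rw [Nat.card_eq_fintype_card, Fintype.card_embedding_eq, Fintype.card_coe,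
        Fintype.card_fin, hcard]
    have h3 : Nat.descFactorial h d ≤ Nat.factorial h := by
      rcases le_or_gt d h with hle | hlt
      · calc Nat.descFactorial h d
            ≤ (h - d).factorial * Nat.descFactorial h d :=
              Nat.le_mul_of_pos_left _ (Nat.factorial_pos _)
          _ = h.factorial := Nat.factorial_mul_descFactorial hle
      · rw [Nat.descFactorial_eq_zero_iff_lt.2 hlt]
        exact Nat.zero_le _
    rw [← Nat.card_coe_set_eq]
    omega
  refine ⟨hUPcard, hDOWNcard, ?_⟩
  -- ### local finiteness
  have hsub : {w : CVert d | AdjC d (mkV d (T, φ)) w} ⊆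
      {w : CVert d | AdjC d (mkV d (T, φ)) w ∧ ∃ h' : ℕ, HeightIs d w h' ∧ h < h'} ∪
      {w : CVert d | AdjC d (mkV d (T, φ)) w ∧ ∃ h' : ℕ, HeightIs d w h' ∧ h' < h} := by
    intro w hw
    obtain ⟨T', φ', u', hA', hI', hu', hcase⟩ := hw
    rcases hcase with ⟨hv1, hw1⟩ | ⟨hw1, hv1⟩
    · left
      have e1 : (leavesF d T).card = (leavesF d T').card := by
        have := congrArg (htV d) hv1
        rw [htV_mk', htV_mk'] at this
        exact this
      refine ⟨⟨T', φ', u', hA', hI', hu', Or.inl ⟨hv1, hw1⟩⟩,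
        (leavesF d T').card - 1 + d,
        ⟨T' ∪ childrenF d u', φ', admissible_union hA' hu', hI', hw1,
          card_leavesF_union h0 hA' hu'⟩, ?_⟩
      have e4 : 1 ≤ (leavesF d T').card := Finset.card_pos.2 (leavesF_nonempty hA')
      omega
    · right
      have e1 : (leavesF d T).card = (leavesF d (T' ∪ childrenF d u')).card := by
        have := congrArg (htV d) hv1
        rw [htV_mk', htV_mk'] at this
        exact this
      have e3 := card_leavesF_union h0 hA' hu'
      have e4 : 1 ≤ (leavesF d T').card := Finset.card_pos.2 (leavesF_nonempty hA')
      exact ⟨⟨T', φ', u', hA', hI', hu', Or.inr ⟨hw1, hv1⟩⟩, (leavesF d T').card,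
        ⟨T', φ', hA', hI', hw1, rfl⟩, by omega⟩
  exact (hUPfin.union hDOWNfin).subset hsub
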